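/- Every polynomial sequence f : ℕ → ℤ of degree ≤ d (a polynomial map from the additive monoid of nonnegative integers to the additive group of integers) is given by a polynomial of degree ≤ d: there exists a polynomial p with rational coefficients of degree ≤ d taking integer values on ℕ such that f(n) = p(n) for all n ∈ ℕ. -/

import Mathlib

namespace PaperPoly

/-- `ADegLE d f` means that `f : S → G`, from an additive commutative semigroup to an
additive commutative group, is a polynomial map of degree at most `d ∈ ℕ`: the base case
`ADegLE 0 f` means `f` is constant, and `ADegLE (d+1) f` means that for every `s : S` the
difference map `D_s f : t ↦ f (s+t) - f t` satisfies `ADegLE d`. -/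
def ADegLE {S : Type*} [AddCommSemigroup S] {G : Type*} [AddCommGroup G] :
    ℕ → (S → G) → Prop
  | 0 => fun f => ∀ t t' : S, f t = f t'
  | d + 1 => fun f => ∀ s : S, ADegLE d (fun t => f (s + t) - f t)

/-- forward difference -/
def del (f : ℕ → ℤ) : ℕ → ℤ := fun n => f (n + 1) - f n

lemma aDegLE_del {d : ℕ} {f : ℕ → ℤ} (hf : ADegLE (d + 1) f) : ADegLE d (del f) := by
  have h := hf 1
  have : (fun t => f (1 + t) - f t) = del f := by
    funext t; simp [del, add_comm]
  rwa [this] at h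

lemma aDegLE_zero_iter {d : ℕ} {f : ℕ → ℤ} (hf : ADegLE d f) : ADegLE 0 (del^[d] f) := by
  induction d generalizing f with
  | zero => exact hf
  | succ d ih =>
    rw [Function.iterate_succ_apply]
    exact ih (aDegLE_del hf)

lemma iter_del_zero {d : ℕ} {f : ℕ → ℤ} (hf : ADegLE d f) :
    ∀ k, d < k → ∀ t, del^[k] f t = 0 := by
  have h0 : ∀ t, del^[d + 1] f t = 0 := by
    intro t
    rw [Function.iterate_succ_apply']
    have := aDegLE_zero_iter hf
    exact sub_eq_zero.2 (this (t + 1) t)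
  have key : ∀ j t, del^[d + 1 + j] f t = 0 := by
    intro j
    induction j with
    | zero => exact h0
    | succ j ih =>
      intro t
      have : d + 1 + (j + 1) = (d + 1 + j) + 1 := by omega
      rw [this, Function.iterate_succ_apply']
      simp [del, ih]
  intro k hk t
  have : d + 1 + (k - d - 1) = k := by omega
  rw [← this]
  exact key _ t

/-- Newton's forward difference formula. -/
lemma newton (n : ℕ) : ∀ f : ℕ → ℤ,
    f n = ∑ k ∈ Finset.range (n + 1), del^[k] f 0 * (n.choose k : ℤ) := by
  induction n with
  | zero => simp
  | succ n ih =>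
    intro f
    have h1 := ih f
    have h2 := ih (del f)
    have hiter : ∀ k, del^[k] (del f) 0 = del^[k + 1] f 0 := by
      intro k; rw [Function.iterate_succ_apply]
    have hf : f (n + 1) = f n + del f n := by simp [del]
    rw [hf, h1, h2]
    rw [Finset.sum_range_succ' (fun k => del^[k] f 0 * ((n+1).choose k : ℤ)) (n + 1)]
    have hch : ∀ i, ((n + 1).choose (i + 1) : ℤ) = (n.choose i : ℤ) + (n.choose (i + 1) : ℤ) := by
      intro i; rw [Nat.choose_succ_succ]; push_cast; ring
    have : ∑ i ∈ Finset.range (n + 1), del^[i + 1] f 0 * ((n + 1).choose (i + 1) : ℤ)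
        = ∑ i ∈ Finset.range (n + 1), (del^[i + 1] f 0 * (n.choose i : ℤ)
          + del^[i + 1] f 0 * (n.choose (i + 1) : ℤ)) := by
      refine Finset.sum_congr rfl fun i _ => ?_
      rw [hch]; ring
    rw [this, Finset.sum_add_distrib]
    have hshift : ∑ i ∈ Finset.range (n + 1), del^[i + 1] f 0 * (n.choose (i + 1) : ℤ)
        + del^[0] f 0 * (n.choose 0 : ℤ)
        = ∑ k ∈ Finset.range (n + 2), del^[k] f 0 * (n.choose k : ℤ) := by
      rw [Finset.sum_range_succ' (fun k => del^[k] f 0 * ((n).choose k : ℤ)) (n + 1)]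
    have hlast : ∑ k ∈ Finset.range (n + 2), del^[k] f 0 * (n.choose k : ℤ)
        = ∑ k ∈ Finset.range (n + 1), del^[k] f 0 * (n.choose k : ℤ) := by
      rw [Finset.sum_range_succ]
      simp [Nat.choose_eq_zero_of_lt (Nat.lt_succ_self n)]
    have h2' : ∑ k ∈ Finset.range (n + 1), del^[k] (del f) 0 * (n.choose k : ℤ)
        = ∑ k ∈ Finset.range (n + 1), del^[k + 1] f 0 * (n.choose k : ℤ) := by
      refine Finset.sum_congr rfl fun k _ => by rw [hiter]
    rw [h2'] at h2 ⊢
    simp only [Function.iterate_zero_apply, Nat.choose_zero_right, Nat.cast_one, mul_one] at hshift ⊢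
    linarith [hshift, hlast]

lemma newton_trunc {f : ℕ → ℤ} {d : ℕ} (hf : ADegLE d f) (n : ℕ) :
    f n = ∑ k ∈ Finset.range (d + 1), del^[k] f 0 * (n.choose k : ℤ) := by
  have h1 := newton n f
  have e1 : ∑ k ∈ Finset.range (n + 1), del^[k] f 0 * (n.choose k : ℤ)
      = ∑ k ∈ Finset.range (n + d + 2), del^[k] f 0 * (n.choose k : ℤ) := by
    refine Finset.sum_subset (Finset.range_subset_range.2 (by omega)) fun k _ hk => ?_
    simp only [Finset.mem_range, not_lt] at hk
    rw [Nat.choose_eq_zero_of_lt (by omega)]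
    simp
  have e2 : ∑ k ∈ Finset.range (d + 1), del^[k] f 0 * (n.choose k : ℤ)
      = ∑ k ∈ Finset.range (n + d + 2), del^[k] f 0 * (n.choose k : ℤ) := by
    refine Finset.sum_subset (Finset.range_subset_range.2 (by omega)) fun k _ hk => ?_
    simp only [Finset.mem_range, not_lt] at hk
    rw [iter_del_zero hf k (by omega)]
    simp
  rw [h1, e1, ← e2]

/-- Every polynomial sequence `f : ℕ → ℤ` of degree `≤ d` is given by a polynomial of
degree `≤ d`: there is a polynomial `p` with rational coefficients of degree `≤ d`
(necessarily taking integer values on `ℕ`) such that `f n = p n` for all `n ∈ ℕ`. -/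
theorem polynomial_sequence_int (f : ℕ → ℤ) (d : ℕ) (hf : ADegLE d f) :
    ∃ p : Polynomial ℚ, p.degree ≤ (d : WithBot ℕ) ∧
      ∀ n : ℕ, p.eval (n : ℚ) = (f n : ℚ) := by
  refine ⟨∑ k ∈ Finset.range (d + 1),
    Polynomial.C ((del^[k] f 0 : ℚ) / (k.factorial : ℚ)) * descPochhammer ℚ k, ?_, ?_⟩
  · refine (Polynomial.degree_sum_le _ _).trans ?_
    rw [Finset.sup_le_iff]
    intro k hk
    have hk' : k ≤ d := by simpa [Nat.lt_succ_iff] using hk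
    refine (Polynomial.degree_mul_le _ _).trans ?_
    have hC : (Polynomial.C ((del^[k] f 0 : ℚ) / (k.factorial : ℚ))).degree ≤ 0 :=
      Polynomial.degree_C_le
    have hD : (descPochhammer ℚ k).degree ≤ (k : WithBot ℕ) := by
      refine (Polynomial.degree_le_natDegree).trans ?_
      rw [descPochhammer_natDegree]
    calc (Polynomial.C ((del^[k] f 0 : ℚ) / (k.factorial : ℚ))).degree
          + (descPochhammer ℚ k).degree
        ≤ 0 + (k : WithBot ℕ) := add_le_add hC hD
      _ = (k : WithBot ℕ) := zero_add _
      _ ≤ (d : WithBot ℕ) := by exact_mod_cast Nat.cast_le.2 hk'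
  · intro n
    rw [newton_trunc hf n]
    push_cast
    rw [Polynomial.eval_finset_sum]
    refine Finset.sum_congr rfl fun k _ => ?_
    rw [Polynomial.eval_mul, Polynomial.eval_C, descPochhammer_eval_eq_descFactorial,
      Nat.descFactorial_eq_factorial_mul_choose]
    have hfac : (k.factorial : ℚ) ≠ 0 := Nat.cast_ne_zero.2 k.factorial_ne_zero
    push_cast
    field_simp

end PaperPoly
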